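/- (Peano's Existence Theorem.) Let n ≥ 1, t0 ∈ ℝ, y0 ∈ ℝ^n, and suppose f is defined and continuous on some open neighborhood of (t0, y0) in ℝ × ℝ^n. Then there exists ε > 0 and a differentiable function φ : [t0−ε, t0+ε] → ℝ^n with φ(t0) = y0 and φ'(t) = f(t, φ(t)) for all t ∈ [t0−ε, t0+ε]. -/

import Mathlib

open Set

open intervalIntegral MeasureTheory BoundedContinuousFunction


noncomputable section PeanoAux

variable {E : Type*} [NormedAddCommGroup E] [NormedSpace ℝ E] [CompleteSpace E]

/-- Move `s` towards `t0` by `δ`. -/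
def peanoSigma (t0 δ s : ℝ) : ℝ := max (min (s + δ) t0) (s - δ)

lemma peanoSigma_continuous (t0 δ : ℝ) : Continuous (peanoSigma t0 δ) := by
  unfold peanoSigma; fun_prop

lemma peanoSigma_mem {t0 δ a b s : ℝ} (hδ : 0 ≤ δ) (ht0 : t0 ∈ Icc a b)
    (hs : s ∈ Icc a b) : peanoSigma t0 δ s ∈ Icc a b := by
  obtain ⟨h1, h2⟩ := ht0; obtain ⟨h3, h4⟩ := hs
  unfold peanoSigma
  constructor
  · exact le_max_of_le_left (le_min (by linarith) h1)
  · exact max_le ((min_le_right _ _).trans h2) (by linarith)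

lemma peanoSigma_close {t0 δ b s : ℝ} (hb : 0 ≤ b) (hs : |s - t0| ≤ b + δ) :
    |peanoSigma t0 δ s - t0| ≤ b := by
  rw [abs_le] at hs ⊢
  unfold peanoSigma
  constructor
  · have h1 : t0 - b ≤ min (s + δ) t0 := le_min (by linarith [hs.1]) (by linarith)
    have h2 := le_max_left (min (s + δ) t0) (s - δ)
    linarith
  · have h3 : max (min (s + δ) t0) (s - δ) ≤ t0 + b :=
      max_le ((min_le_right _ _).trans (by linarith)) (by linarith [hs.2])
    linarith

lemma peanoSigma_dist {t0 δ s : ℝ} (hδ : 0 ≤ δ) : |peanoSigma t0 δ s - s| ≤ δ := by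
  rw [abs_le]
  unfold peanoSigma
  have h1 : s - δ ≤ max (min (s + δ) t0) (s - δ) := le_max_right _ _
  have h2 : max (min (s + δ) t0) (s - δ) ≤ s + δ := max_le (min_le_left _ _) (by linarith)
  constructor <;> linarith

/-- One step of the delayed Picard iteration. -/
def peanoIter (g : ℝ × E → E) (t0 : ℝ) (y0 : E) (δ : ℝ) (u : ℝ → E) : ℝ → E :=
  fun t => y0 + ∫ s in t0..t, g (s, u (peanoSigma t0 δ s))

lemma peanoIter_integrand_continuous {g : ℝ × E → E} (hg : Continuous g)
    {u : ℝ → E} (hu : Continuous u) (t0 δ : ℝ) :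
    Continuous fun s => g (s, u (peanoSigma t0 δ s)) := by
  have := peanoSigma_continuous t0 δ
  fun_prop

lemma peanoIter_hasDerivAt {g : ℝ × E → E} (hg : Continuous g)
    {u : ℝ → E} (hu : Continuous u) (t0 : ℝ) (y0 : E) (δ t : ℝ) :
    HasDerivAt (peanoIter g t0 y0 δ u) (g (t, u (peanoSigma t0 δ t))) t := by
  have h := peanoIter_integrand_continuous hg hu t0 δ
  exact ((h.integral_hasStrictDerivAt t0 t).hasDerivAt).const_add y0

lemma peanoIter_continuous {g : ℝ × E → E} (hg : Continuous g)
    {u : ℝ → E} (hu : Continuous u) (t0 : ℝ) (y0 : E) (δ : ℝ) :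
    Continuous (peanoIter g t0 y0 δ u) :=
  continuous_iff_continuousAt.2 fun t =>
    (peanoIter_hasDerivAt hg hu t0 y0 δ t).continuousAt

lemma peanoIter_congr {g : ℝ × E → E} {t0 : ℝ} {y0 : E} {δ b : ℝ}
    (hδ : 0 ≤ δ) (hb : 0 ≤ b) {u v : ℝ → E}
    (huv : ∀ s ∈ Icc (t0 - b) (t0 + b), u s = v s)
    {t : ℝ} (ht : t ∈ Icc (t0 - (b + δ)) (t0 + (b + δ))) :
    peanoIter g t0 y0 δ u t = peanoIter g t0 y0 δ v t := by
  unfold peanoIter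
  congr 1
  apply intervalIntegral.integral_congr
  intro s hs
  have hsub : uIcc t0 t ⊆ Icc (t0 - (b + δ)) (t0 + (b + δ)) :=
    uIcc_subset_Icc ⟨by linarith, by linarith⟩ ht
  have hs' := hsub hs
  have habs : |s - t0| ≤ b + δ := by
    rw [abs_le]; exact ⟨by linarith [hs'.1], by linarith [hs'.2]⟩
  have hclose := peanoSigma_close hb habs
  have hmem : peanoSigma t0 δ s ∈ Icc (t0 - b) (t0 + b) := by
    have := abs_le.1 hclose; exact ⟨by linarith [this.1], by linarith [this.2]⟩
  show g (s, u (peanoSigma t0 δ s)) = g (s, v (peanoSigma t0 δ s))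
  rw [huv _ hmem]

lemma peanoIter_sub {g : ℝ × E → E} (hg : Continuous g) {t0 : ℝ} {y0 : E} {δ ε M : ℝ}
    {u : ℝ → E} (hu : Continuous u)
    (hbound : ∀ s ∈ Icc (t0 - ε) (t0 + ε), ‖g (s, u (peanoSigma t0 δ s))‖ ≤ M)
    {t t' : ℝ} (ht : t ∈ Icc (t0 - ε) (t0 + ε)) (ht' : t' ∈ Icc (t0 - ε) (t0 + ε)) :
    ‖peanoIter g t0 y0 δ u t - peanoIter g t0 y0 δ u t'‖ ≤ M * |t - t'| := by
  have hint := (peanoIter_integrand_continuous hg hu t0 δ).intervalIntegrable (μ := volume)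
  unfold peanoIter
  have heq : (y0 + ∫ s in t0..t, g (s, u (peanoSigma t0 δ s)))
      - (y0 + ∫ s in t0..t', g (s, u (peanoSigma t0 δ s)))
      = ∫ s in t'..t, g (s, u (peanoSigma t0 δ s)) := by
    rw [add_sub_add_left_eq_sub]
    exact intervalIntegral.integral_interval_sub_left (hint t0 t) (hint t0 t')
  rw [heq]
  apply intervalIntegral.norm_integral_le_of_norm_le_const
  intro s hs
  apply hbound
  have : s ∈ uIcc t' t := uIoc_subset_uIcc hs
  exact uIcc_subset_Icc ht' ht this



set_option maxHeartbeats 800000 in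
/-- Existence of delayed approximate solutions. -/
lemma peano_approx {g : ℝ × E → E} (hg : Continuous g) (t0 : ℝ) (y0 : E)
    {ε r M δ : ℝ} (hε : 0 ≤ ε) (hr : 0 ≤ r) (hM : 0 ≤ M) (hMε : M * ε ≤ r)
    (hbound : ∀ s ∈ Icc (t0 - ε) (t0 + ε), ∀ y ∈ Metric.closedBall y0 r, ‖g (s, y)‖ ≤ M)
    (hδ : 0 < δ) :
    ∃ u : ℝ → E, Continuous u ∧ (∀ t ∈ Icc (t0 - ε) (t0 + ε), u t ∈ Metric.closedBall y0 r) ∧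
      (∀ t ∈ Icc (t0 - ε) (t0 + ε),
        u t = y0 + ∫ s in t0..t, g (s, u (peanoSigma t0 δ s))) := by
  set F := peanoIter g t0 y0 δ with hF
  set c : ℝ → E := fun _ => y0 with hc
  -- basic invariants of the iterates
  have key : ∀ m : ℕ, Continuous (F^[m] c) ∧
      ∀ t ∈ Icc (t0 - ε) (t0 + ε), F^[m] c t ∈ Metric.closedBall y0 r := by
    intro m
    induction m with
    | zero => exact ⟨continuous_const, fun t _ => by simp [hc, hr]⟩
    | succ m ih =>
      obtain ⟨ihc, ihb⟩ := ih
      rw [Function.iterate_succ_apply']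
      have hb' : ∀ s ∈ Icc (t0 - ε) (t0 + ε),
          ‖g (s, F^[m] c (peanoSigma t0 δ s))‖ ≤ M := by
        intro s hs
        have hσ : peanoSigma t0 δ s ∈ Icc (t0 - ε) (t0 + ε) :=
          peanoSigma_mem hδ.le ⟨by linarith, by linarith⟩ hs
        exact hbound s hs _ (ihb _ hσ)
      refine ⟨peanoIter_continuous hg ihc t0 y0 δ, fun t ht => ?_⟩
      have ht0 : t0 ∈ Icc (t0 - ε) (t0 + ε) := ⟨by linarith, by linarith⟩
      have h1 : ‖F (F^[m] c) t - F (F^[m] c) t0‖ ≤ M * |t - t0| :=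
        peanoIter_sub hg ihc hb' ht ht0
      have h2 : F (F^[m] c) t0 = y0 := by
        show peanoIter g t0 y0 δ (F^[m] c) t0 = y0
        unfold peanoIter
        rw [intervalIntegral.integral_same, add_zero]
      rw [Metric.mem_closedBall, dist_eq_norm]
      rw [h2] at h1
      have habs : |t - t0| ≤ ε := abs_le.2 ⟨by linarith [ht.1], by linarith [ht.2]⟩
      calc ‖F (F^[m] c) t - y0‖ ≤ M * |t - t0| := h1
        _ ≤ M * ε := by nlinarith
        _ ≤ r := hMε
  -- stabilization
  have stab : ∀ m : ℕ, ∀ t ∈ Icc (t0 - m * δ) (t0 + m * δ), F^[m] c t = F^[m + 1] c t := by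
    intro m
    induction m with
    | zero =>
      intro t ht
      have ht' : t = t0 := le_antisymm (by simpa using ht.2) (by simpa using ht.1)
      show c t = F c t
      rw [ht']
      show y0 = peanoIter g t0 y0 δ c t0
      unfold peanoIter
      rw [intervalIntegral.integral_same, add_zero]
    | succ m ih =>
      intro t ht
      rw [Function.iterate_succ_apply', Function.iterate_succ_apply' (n := m + 1)]
      refine peanoIter_congr hδ.le (by positivity) ih ?_
      convert ht using 3 <;> push_cast <;> ring
  set N : ℕ := ⌈ε / δ⌉₊ with hN
  have hNδ : ε ≤ N * δ := by
    rw [hN]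
    calc ε = ε / δ * δ := by field_simp
      _ ≤ ⌈ε / δ⌉₊ * δ := by
        have := Nat.le_ceil (ε / δ)
        nlinarith
  refine ⟨F^[N] c, (key N).1, (key N).2, fun t ht => ?_⟩
  have hmem : t ∈ Icc (t0 - N * δ) (t0 + N * δ) :=
    ⟨by linarith [ht.1], by linarith [ht.2]⟩
  have := stab N t hmem
  rw [Function.iterate_succ_apply'] at this
  calc F^[N] c t = F (F^[N] c) t := this
    _ = y0 + ∫ s in t0..t, g (s, F^[N] c (peanoSigma t0 δ s)) := rfl

end PeanoAux

set_option maxHeartbeats 1600000 in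
set_option synthInstance.maxHeartbeats 1000000 in
/-- Peano's Existence Theorem: if `f` is continuous on an open neighborhood `U` of
`(t0, y0)` in `ℝ × ℝⁿ`, then the IVP `y' = f(t,y)`, `y t0 = y0` has a solution on
some interval `[t0 - ε, t0 + ε]` (with graph inside `U`). -/
theorem peano (n : ℕ) (hn : 1 ≤ n) (t0 : ℝ) (y0 : Fin n → ℝ)
    (U : Set (ℝ × (Fin n → ℝ))) (hU : IsOpen U) (hmem : (t0, y0) ∈ U)
    (f : ℝ → (Fin n → ℝ) → (Fin n → ℝ))
    (hf : ContinuousOn (fun p : ℝ × (Fin n → ℝ) => f p.1 p.2) U) :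
    ∃ ε > (0:ℝ), ∃ φ : ℝ → Fin n → ℝ,
      φ t0 = y0 ∧
      ∀ t ∈ Icc (t0 - ε) (t0 + ε),
        (t, φ t) ∈ U ∧ HasDerivWithinAt φ (f t (φ t)) (Icc (t0 - ε) (t0 + ε)) t := by
  classical
  -- Step A: a compact product neighborhood inside U
  obtain ⟨ρ, hρ, hballU⟩ := Metric.isOpen_iff.1 hU _ hmem
  set r := ρ / 2 with hrdef
  have hr : 0 < r := by positivity
  set K : Set (ℝ × (Fin n → ℝ)) := Icc (t0 - r) (t0 + r) ×ˢ Metric.closedBall y0 r with hKdef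
  have hKU : K ⊆ U := by
    intro p hp
    apply hballU
    rw [Metric.mem_ball, Prod.dist_eq]
    obtain ⟨hp1, hp2⟩ := hp
    have h1 : dist p.1 t0 ≤ r := by
      rw [Real.dist_eq, abs_le]; exact ⟨by linarith [hp1.1], by linarith [hp1.2]⟩
    have h2 : dist p.2 y0 ≤ r := hp2
    have hlt : r < ρ := by rw [hrdef]; linarith
    exact lt_of_le_of_lt (max_le h1 h2) hlt
  have hKcl : IsClosed K := isClosed_Icc.prod Metric.isClosed_closedBall
  have hKcp : IsCompact K := isCompact_Icc.prod (isCompact_closedBall _ _)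
  -- Step B: Tietze extension of f to a globally continuous g
  have hfK : ContinuousOn (fun p : ℝ × (Fin n → ℝ) => f p.1 p.2) K := hf.mono hKU
  obtain ⟨G, hG⟩ := (ContinuousMap.mk _
    (continuousOn_iff_continuous_restrict.1 hfK)).exists_restrict_eq hKcl
  set g : ℝ × (Fin n → ℝ) → (Fin n → ℝ) := fun p => G p with hgdef
  have hg : Continuous g := G.continuous
  have hgf : ∀ p ∈ K, g p = f p.1 p.2 := by
    intro p hp
    have := DFunLike.congr_fun hG (⟨p, hp⟩ : K)
    simpa [ContinuousMap.restrict_apply] using this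
  -- Step C: a bound for g on K
  obtain ⟨C, hC⟩ := hKcp.exists_bound_of_continuousOn hg.continuousOn
  set M := max C 1 with hMdef
  have hM1 : (1:ℝ) ≤ M := le_max_right _ _
  have hM0 : (0:ℝ) < M := lt_of_lt_of_le one_pos hM1
  have hMb : ∀ p ∈ K, ‖g p‖ ≤ M := fun p hp => (hC p hp).trans (le_max_left _ _)
  -- Step D: choose ε
  set ε := min r (r / M) with hεdef
  have hε : 0 < ε := lt_min hr (by positivity)
  have hεr : ε ≤ r := min_le_left _ _
  have hMε : M * ε ≤ r := by
    have h1 : ε ≤ r / M := min_le_right _ _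
    calc M * ε ≤ M * (r / M) := by nlinarith
      _ = r := by field_simp
  have hle : t0 - ε ≤ t0 + ε := by linarith
  have hIsub : ∀ t ∈ Icc (t0 - ε) (t0 + ε), t ∈ Icc (t0 - r) (t0 + r) := by
    intro t ht; exact ⟨by linarith [ht.1], by linarith [ht.2]⟩
  have ht0I : t0 ∈ Icc (t0 - ε) (t0 + ε) := ⟨by linarith, by linarith⟩
  have hbound : ∀ s ∈ Icc (t0 - ε) (t0 + ε), ∀ y ∈ Metric.closedBall y0 r,
      ‖g (s, y)‖ ≤ M := fun s hs y hy => hMb (s, y) ⟨hIsub s hs, hy⟩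
  -- Step E: delayed approximate solutions
  have happrox : ∀ k : ℕ, ∃ u : ℝ → Fin n → ℝ, Continuous u ∧
      (∀ t ∈ Icc (t0 - ε) (t0 + ε), u t ∈ Metric.closedBall y0 r) ∧
      (∀ t ∈ Icc (t0 - ε) (t0 + ε),
        u t = y0 + ∫ s in t0..t, g (s, u (peanoSigma t0 (1/((k:ℝ)+1)) s))) :=
    fun k => peano_approx hg t0 y0 hε.le hr.le hM0.le hMε hbound (by positivity)
  choose u hu1 hu2 hu3 using happrox
  -- Lipschitz estimate for the approximations
  have hulip : ∀ k : ℕ, ∀ t ∈ Icc (t0 - ε) (t0 + ε), ∀ t' ∈ Icc (t0 - ε) (t0 + ε),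
      ‖u k t - u k t'‖ ≤ M * |t - t'| := by
    intro k t ht t' ht'
    set δ := 1/((k:ℝ)+1) with hδdef
    have hδ : 0 < δ := by positivity
    have hb' : ∀ s ∈ Icc (t0 - ε) (t0 + ε),
        ‖g (s, u k (peanoSigma t0 δ s))‖ ≤ M := by
      intro s hs
      exact hbound s hs _ (hu2 k _ (peanoSigma_mem hδ.le ht0I hs))
    have h := peanoIter_sub (y0 := y0) hg (hu1 k) hb' ht ht'
    have e : ∀ τ ∈ Icc (t0 - ε) (t0 + ε), peanoIter g t0 y0 δ (u k) τ = u k τ := by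
      intro τ hτ
      unfold peanoIter
      exact (hu3 k τ hτ).symm
    rwa [e t ht, e t' ht'] at h
  -- Step F: Arzelà–Ascoli
  haveI : CompactSpace ↥(Icc (t0 - ε) (t0 + ε)) := isCompact_iff_compactSpace.1 isCompact_Icc
  set W : ℕ → (↥(Icc (t0 - ε) (t0 + ε)) →ᵇ (Fin n → ℝ)) := fun k =>
    BoundedContinuousFunction.mkOfCompact ⟨fun x => u k x, (hu1 k).comp continuous_subtype_val⟩
    with hWdef
  set A : Set (↥(Icc (t0 - ε) (t0 + ε)) →ᵇ (Fin n → ℝ)) :=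
    {w | (∀ x, w x ∈ Metric.closedBall y0 r) ∧ ∀ x y, dist (w x) (w y) ≤ M * dist x y}
    with hAdef
  have hWA : ∀ k, W k ∈ A := by
    intro k
    constructor
    · intro x; exact hu2 k x x.2
    · intro x y
      have := hulip k x x.2 y y.2
      rw [dist_eq_norm, Subtype.dist_eq, Real.dist_eq]
      exact this
  have hequi : Equicontinuous ((↑) : A → ↥(Icc (t0 - ε) (t0 + ε)) → (Fin n → ℝ)) := by
    apply Metric.equicontinuous_of_continuity_modulus (fun d => M * d)
    · have : Continuous fun d : ℝ => M * d := by fun_prop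
      simpa using this.tendsto 0
    · intro x y i
      exact i.2.2 x y
  have hAcomp := BoundedContinuousFunction.arzela_ascoli (Metric.closedBall y0 r)
    (isCompact_closedBall _ _) A (fun w x hw => hw.1 x) hequi
  obtain ⟨winf, hwinfcl, ψ, hψ, hψtend⟩ :=
    hAcomp.tendsto_subseq (x := W) (fun k => subset_closure (hWA k))
  have hwball : ∀ x, winf x ∈ Metric.closedBall y0 r := by
    intro x
    have hev : Continuous fun w : ↥(Icc (t0 - ε) (t0 + ε)) →ᵇ (Fin n → ℝ) => w x :=
      continuous_eval_const x
    have := map_mem_closure hev hwinfcl (fun w hw => hw.1 x)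
    rwa [Metric.isClosed_closedBall.closure_eq] at this
  -- Step G: the candidate limit function
  set Φ : ℝ → Fin n → ℝ := fun t => winf (projIcc (t0 - ε) (t0 + ε) hle t) with hΦdef
  have hΦcont : Continuous Φ := winf.continuous.comp continuous_projIcc
  have hΦeq : ∀ t (ht : t ∈ Icc (t0 - ε) (t0 + ε)), Φ t = winf ⟨t, ht⟩ := by
    intro t ht
    rw [hΦdef]
    simp [projIcc_of_mem hle ht]
  have hΦball : ∀ t, Φ t ∈ Metric.closedBall y0 r := fun t => hwball _
  have hΦK : ∀ t ∈ Icc (t0 - ε) (t0 + ε), (t, Φ t) ∈ K :=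
    fun t ht => ⟨hIsub t ht, hΦball t⟩
  have hGint : Continuous fun s => g (s, Φ s) := by fun_prop
  -- Step H: Φ satisfies the integral equation on I
  have heqn : ∀ t ∈ Icc (t0 - ε) (t0 + ε), Φ t = y0 + ∫ s in t0..t, g (s, Φ s) := by
    intro t ht
    have key : ∀ η > (0:ℝ), ‖Φ t - (y0 + ∫ s in t0..t, g (s, Φ s))‖ ≤ η := by
      intro η hη
      have hUC := hKcp.uniformContinuousOn_of_continuous hg.continuousOn
      rw [Metric.uniformContinuousOn_iff] at hUC
      set η' := η / (2 * (ε + 1)) with hη'def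
      have hη' : 0 < η' := by positivity
      obtain ⟨θ, hθ, hθ'⟩ := hUC η' hη'
      -- choose an index far enough along the subsequence
      obtain ⟨K1, hK1⟩ := (Metric.tendsto_atTop.1 hψtend) (min (θ/2) (η/2))
        (lt_min (by linarith) (by linarith))
      set k0 : ℕ := ⌈2 * M / θ⌉₊ with hk0def
      set k := max k0 K1 with hkdef
      set δ := 1/((ψ k : ℝ)+1) with hδdef
      have hδpos : 0 < δ := by positivity
      have hψk : (k : ℝ) ≤ (ψ k : ℝ) := by exact_mod_cast hψ.le_apply
      have hk0le : (k0 : ℝ) ≤ (k : ℝ) := by exact_mod_cast Nat.cast_le.2 (le_max_left _ _)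
      have hceil : 2 * M / θ ≤ (k0 : ℝ) := Nat.le_ceil _
      have hMδ : M * δ < θ / 2 := by
        rw [hδdef]
        have h1 : 2 * M / θ < (ψ k : ℝ) + 1 := by linarith
        have h2 : 2 * M < θ * ((ψ k : ℝ) + 1) := by
          have := (div_lt_iff₀ hθ).1 h1
          linarith
        rw [mul_one_div, div_lt_div_iff₀ (by positivity) (by norm_num)]
        linarith
      have hdist : dist (W (ψ k)) winf < min (θ/2) (η/2) := hK1 k (le_max_right _ _)
      set v := u (ψ k) with hvdef
      set d := dist (W (ψ k)) winf with hddef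
      have hd0 : 0 ≤ d := dist_nonneg
      have hvΦ : ∀ s (hs : s ∈ Icc (t0 - ε) (t0 + ε)), dist (v s) (Φ s) ≤ d := by
        intro s hs
        rw [hΦeq s hs]
        exact BoundedContinuousFunction.dist_coe_le_dist (f := W (ψ k)) (g := winf)
          (⟨s, hs⟩ : ↥(Icc (t0 - ε) (t0 + ε)))
      -- pointwise estimate of the integrands
      have hpt : ∀ s ∈ Set.uIoc t0 t,
          ‖g (s, v (peanoSigma t0 δ s)) - g (s, Φ s)‖ ≤ η' := by
        intro s hs
        have hsI : s ∈ Icc (t0 - ε) (t0 + ε) :=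
          uIcc_subset_Icc ht0I ht (uIoc_subset_uIcc hs)
        have hσI : peanoSigma t0 δ s ∈ Icc (t0 - ε) (t0 + ε) :=
          peanoSigma_mem hδpos.le ht0I hsI
        have h1 : dist (v (peanoSigma t0 δ s)) (v s) ≤ M * δ := by
          rw [dist_eq_norm]
          calc ‖v (peanoSigma t0 δ s) - v s‖ ≤ M * |peanoSigma t0 δ s - s| :=
            hulip (ψ k) _ hσI s hsI
          _ ≤ M * δ := by
            have := peanoSigma_dist (t0 := t0) (s := s) hδpos.le
            nlinarith
        have h2 : dist (v (peanoSigma t0 δ s)) (Φ s) < θ := by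
          have hd2 : d < θ/2 := lt_of_lt_of_le hdist (min_le_left _ _)
          calc dist (v (peanoSigma t0 δ s)) (Φ s)
              ≤ dist (v (peanoSigma t0 δ s)) (v s) + dist (v s) (Φ s) := dist_triangle _ _ _
            _ ≤ M * δ + d := add_le_add h1 (hvΦ s hsI)
            _ < θ/2 + θ/2 := by linarith
            _ = θ := by ring
        have hp1 : (s, v (peanoSigma t0 δ s)) ∈ K := ⟨hIsub s hsI, hu2 (ψ k) _ hσI⟩
        have hp2 : (s, Φ s) ∈ K := hΦK s hsI
        have hdd : dist ((s, v (peanoSigma t0 δ s)) : ℝ × (Fin n → ℝ)) (s, Φ s) < θ := by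
          rw [Prod.dist_eq]
          simp only [dist_self]
          exact max_lt hθ h2
        have := hθ' _ hp1 _ hp2 hdd
        rw [dist_eq_norm] at this
        exact this.le
      -- integral estimate
      have hintv : IntervalIntegrable (fun s => g (s, v (peanoSigma t0 δ s))) volume t0 t :=
        (peanoIter_integrand_continuous hg (hu1 (ψ k)) t0 δ).intervalIntegrable t0 t
      have hintΦ : IntervalIntegrable (fun s => g (s, Φ s)) volume t0 t :=
        hGint.intervalIntegrable t0 t
      have habs : |t - t0| ≤ ε := abs_le.2 ⟨by linarith [ht.1], by linarith [ht.2]⟩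
      have hint : ‖(∫ s in t0..t, g (s, v (peanoSigma t0 δ s))) -
          ∫ s in t0..t, g (s, Φ s)‖ ≤ η' * ε := by
        rw [← intervalIntegral.integral_sub hintv hintΦ]
        calc ‖∫ s in t0..t, (g (s, v (peanoSigma t0 δ s)) - g (s, Φ s))‖
            ≤ η' * |t - t0| := intervalIntegral.norm_integral_le_of_norm_le_const hpt
          _ ≤ η' * ε := by nlinarith
      have hveq : v t = y0 + ∫ s in t0..t, g (s, v (peanoSigma t0 δ s)) := hu3 (ψ k) t ht
      have hfirst : ‖Φ t - v t‖ ≤ d := by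
        rw [← dist_eq_norm, dist_comm]
        exact hvΦ t ht
      have hdη : d < η/2 := lt_of_lt_of_le hdist (min_le_right _ _)
      have hη'ε : η' * ε ≤ η / 2 := by
        rw [hη'def]
        rw [div_mul_eq_mul_div, div_le_div_iff₀ (by positivity) (by norm_num)]
        nlinarith
      calc ‖Φ t - (y0 + ∫ s in t0..t, g (s, Φ s))‖
          ≤ ‖Φ t - v t‖ + ‖v t - (y0 + ∫ s in t0..t, g (s, Φ s))‖ := by
            have : Φ t - (y0 + ∫ s in t0..t, g (s, Φ s)) =
                (Φ t - v t) + (v t - (y0 + ∫ s in t0..t, g (s, Φ s))) := by abel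
            rw [this]; exact norm_add_le _ _
        _ ≤ d + η' * ε := by
            refine add_le_add hfirst ?_
            rw [hveq]
            have : (y0 + ∫ s in t0..t, g (s, v (peanoSigma t0 δ s))) -
                (y0 + ∫ s in t0..t, g (s, Φ s)) =
                (∫ s in t0..t, g (s, v (peanoSigma t0 δ s))) - ∫ s in t0..t, g (s, Φ s) := by
              abel
            rw [this]
            exact hint
        _ ≤ η/2 + η/2 := add_le_add hdη.le hη'ε
        _ = η := by ring
    have h0 : ‖Φ t - (y0 + ∫ s in t0..t, g (s, Φ s))‖ ≤ 0 :=
      le_of_forall_pos_le_add fun η hη => by simpa using key η hη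
    have := norm_le_zero_iff.1 h0
    exact sub_eq_zero.1 this
  -- Step I: conclusion
  set Ψ : ℝ → Fin n → ℝ := fun t => y0 + ∫ s in t0..t, g (s, Φ s) with hΨdef
  have hΨderiv : ∀ t, HasDerivAt Ψ (g (t, Φ t)) t := fun t =>
    ((hGint.integral_hasStrictDerivAt t0 t).hasDerivAt).const_add y0
  refine ⟨ε, hε, Ψ, ?_, ?_⟩
  · rw [hΨdef]
    simp [intervalIntegral.integral_same]
  · intro t ht
    have hΨt : Ψ t = Φ t := (heqn t ht).symm
    refine ⟨?_, ?_⟩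
    · rw [hΨt]; exact hKU (hΦK t ht)
    · have h := (hΨderiv t).hasDerivWithinAt (s := Icc (t0 - ε) (t0 + ε))
      have hgeq : g (t, Φ t) = f t (Ψ t) := by
        rw [hΨt]
        exact hgf (t, Φ t) (hΦK t ht)
      rwa [hgeq] at h
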